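/- Take f(y) = y² for all y ∈ [0,1]. If H^{11} ≤ H^{22} + 2H^{12}, H^{22} ≤ H^{11} + 2H^{21}, and 10 H_1 H_2 + 4(H^{12} − H^{11})(H_1 + H_2) ≥ 5 H_2² + H_1², then the quadratic P_3(y) := (H_1+H_2) y² + (H_1 − 3H_2) y + H_2 + H^{12} − H^{11} satisfies P_3(y) ≥ 0 for all y ∈ [0,1], and consequently h′(y) ≤ 0 for all y ∈ [0,1], i.e. h is non-increasing on [0,1]. -/

import Mathlib

open MeasureTheory Filter Set

/-- Quadratic skewing function f(y) = y²: sufficient conditions for h to be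
non-increasing on [0,1]. -/
theorem quadratic_model_h_nonincreasing
    (H11 H12 H21 H22 : ℝ)
    (hH11 : 0 ≤ H11) (hH22 : 0 ≤ H22) (hH12 : 0 < H12) (hH21 : 0 < H21)
    (H1 H2 : ℝ) (hH1 : H1 = H11 + H21) (hH2 : H2 = H12 + H22) (hHne : H1 ≠ H2)
    (h : ℝ → ℝ)
    (hh : ∀ y, h y =
      ((H11 - y * H1) * y ^ 2 + (H12 - y * H2) * (1 - y) ^ 2) / (y ^ 2 + (1 - y) ^ 2))
    (P3 : ℝ → ℝ)
    (hP3 : ∀ y, P3 y = (H1 + H2) * y ^ 2 + (H1 - 3 * H2) * y + H2 + H12 - H11)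
    (hc1 : H11 ≤ H22 + 2 * H12) (hc2 : H22 ≤ H11 + 2 * H21)
    (hc3 : 5 * H2 ^ 2 + H1 ^ 2 ≤ 10 * H1 * H2 + 4 * (H12 - H11) * (H1 + H2)) :
    (∀ y ∈ Set.Icc (0:ℝ) 1, 0 ≤ P3 y) ∧
    (∀ y ∈ Set.Icc (0:ℝ) 1, deriv h y ≤ 0) ∧
    AntitoneOn h (Set.Icc 0 1) := by
  have hH1nn : 0 ≤ H1 := by rw [hH1]; linarith
  have hH2nn : 0 ≤ H2 := by rw [hH2]; linarith
  have hSpos : 0 < H1 + H2 := by rw [hH1, hH2]; linarith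
  have hfun : h = fun y =>
      ((H11 - y * H1) * y ^ 2 + (H12 - y * H2) * (1 - y) ^ 2) / (y ^ 2 + (1 - y) ^ 2) :=
    funext hh
  -- Part 1: P3 is nonnegative everywhere (positive leading coeff, nonpositive discriminant)
  have hP3nn : ∀ y : ℝ, 0 ≤ P3 y := by
    intro y
    rw [hP3]
    nlinarith [sq_nonneg (2 * (H1 + H2) * y + (H1 - 3 * H2)), hSpos, sq_nonneg y,
      mul_pos hSpos hSpos]
  -- The derivative of h at every point
  have key : ∀ z : ℝ, HasDerivAt h
      ((((-H1) * z ^ 2 + (H11 - z * H1) * (2 * z) +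
          ((-H2) * (1 - z) ^ 2 + (H12 - z * H2) * (-(2 * (1 - z))))) * (z ^ 2 + (1 - z) ^ 2) -
        ((H11 - z * H1) * z ^ 2 + (H12 - z * H2) * (1 - z) ^ 2) * (2 * z - 2 * (1 - z))) /
        (z ^ 2 + (1 - z) ^ 2) ^ 2) z := by
    intro z
    rw [hfun]
    have hD0 : (z ^ 2 + (1 - z) ^ 2) ≠ 0 := by
      have : (0:ℝ) < z ^ 2 + (1 - z) ^ 2 := by nlinarith [sq_nonneg (2 * z - 1)]
      exact ne_of_gt this
    have A : HasDerivAt (fun t : ℝ => H11 - t * H1) (-H1) z := by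
      simpa using ((hasDerivAt_id z).mul_const H1).const_sub H11
    have C : HasDerivAt (fun t : ℝ => H12 - t * H2) (-H2) z := by
      simpa using ((hasDerivAt_id z).mul_const H2).const_sub H12
    have B : HasDerivAt (fun t : ℝ => t ^ 2) (2 * z) z := by
      simpa using hasDerivAt_pow 2 z
    have E : HasDerivAt (fun t : ℝ => (1 - t) ^ 2) (-(2 * (1 - z))) z := by
      have := ((hasDerivAt_id z).const_sub 1).fun_pow 2
      simpa using this
    have hN := (A.fun_mul B).fun_add (C.fun_mul E)
    have hD := B.fun_add E
    have := hN.fun_div hD hD0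
    rw [sub_eq_add_neg (2 * z) (2 * (1 - z))]
    convert this using 1
  have hderiv : ∀ y ∈ Set.Icc (0:ℝ) 1, deriv h y ≤ 0 := by
    intro y hy
    obtain ⟨hy0, hy1⟩ := hy
    rw [(key y).deriv]
    apply div_nonpos_of_nonpos_of_nonneg _ (sq_nonneg _)
    have hp := hP3nn y
    rw [hP3] at hp
    nlinarith [mul_nonneg (mul_nonneg hy0 (by linarith : (0:ℝ) ≤ 1 - y)) hp,
      mul_nonneg hH1nn (sq_nonneg (y * (1 - 2 * y))),
      mul_nonneg hH2nn (sq_nonneg ((1 - y) * (1 - 2 * y)))]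
  refine ⟨fun y _ => hP3nn y, hderiv, ?_⟩
  have hdiff : Differentiable ℝ h := fun z => (key z).differentiableAt
  apply antitoneOn_of_deriv_nonpos (convex_Icc 0 1) hdiff.continuous.continuousOn
    (hdiff.differentiableOn)
  intro x hx
  rw [interior_Icc] at hx
  exact hderiv x ⟨le_of_lt hx.1, le_of_lt hx.2⟩
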